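/- Let b < −6 be real, let n ≥ 0 be an integer, and define Q(z) = (z^{2^n} − √(−b))² + b. Then every w ∈ ℂ with 1/3 < |Q(w)| < 3 satisfies Q'(w) ≠ 0 and |Q'(w)| > 2^{n+1}/(12√(−b)); in particular |Q'(w)| > 1/(6√(−b)), and if moreover 2^n ≥ 12√(−b), then |Q'(w)| > 2 (so any locally defined inverse branch of Q has derivative of absolute value less than 6√(−b), respectively less than 1/2, at points of the annulus {1/3 < |z| < 3}). -/

import Mathlib

set_option maxHeartbeats 1600000 in
/-- Let `b < −6` be real, `n ≥ 0`, and `Q(z) = (z^{2^n} − √(−b))² + b`. Then every `w` with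
`1/3 < |Q(w)| < 3` satisfies `Q'(w) ≠ 0` and `|Q'(w)| > 2^{n+1}/(12√(−b))`; in particular
`|Q'(w)| > 1/(6√(−b))`, and if moreover `2^n ≥ 12√(−b)` then `|Q'(w)| > 2`. -/
theorem deriv_lower_bound_on_annulus
    (b : ℝ) (hb : b < -6) (n : ℕ)
    (Q : ℂ → ℂ)
    (hQ : Q = fun z : ℂ => (z ^ 2 ^ n - ((Real.sqrt (-b) : ℝ) : ℂ)) ^ 2 + (b : ℂ)) :
    ∀ w : ℂ, 1 / 3 < ‖Q w‖ → ‖Q w‖ < 3 →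
      deriv Q w ≠ 0 ∧
      (2 : ℝ) ^ (n + 1) / (12 * Real.sqrt (-b)) < ‖deriv Q w‖ ∧
      1 / (6 * Real.sqrt (-b)) < ‖deriv Q w‖ ∧
      (12 * Real.sqrt (-b) ≤ (2 : ℝ) ^ n → 2 < ‖deriv Q w‖) := by
  intro w hlo hhi
  set s : ℝ := Real.sqrt (-b) with hs_def
  have hs0 : 0 ≤ s := Real.sqrt_nonneg _
  have hs_sq : s ^ 2 = -b := Real.sq_sqrt (by linarith)
  have hs2 : 2 < s := by
    have := (Real.lt_sqrt (by norm_num : (0:ℝ) ≤ 2)).2 (by nlinarith : (2:ℝ)^2 < -b)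
    simpa [hs_def] using this
  set N : ℕ := 2 ^ n with hN
  have hN1 : 1 ≤ N := Nat.one_le_two_pow
  set u : ℂ := w ^ N with hu
  -- derivative
  have hder : HasDerivAt Q ((2:ℕ) * (u - (s:ℂ)) ^ (2-1) * ((N:ℂ) * w ^ (N-1))) w := by
    rw [hQ]
    exact (((hasDerivAt_pow N w).sub_const _).pow 2).add_const _
  have hderiv : deriv Q w = 2 * (u - (s:ℂ)) * ((N:ℂ) * w ^ (N-1)) := by
    have := hder.deriv
    simpa using this
  set r : ℝ := ‖u - (s:ℂ)‖ with hr_def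
  have hr0 : 0 ≤ r := norm_nonneg _
  set t : ℝ := ‖u‖ with ht_def
  have ht0 : 0 ≤ t := norm_nonneg _
  -- |u - s| > 1
  have hQb : Q w - (b:ℂ) = (u - (s:ℂ))^2 := by rw [hQ]; ring
  have hr2 : 3 < r ^ 2 := by
    have h1 : ‖Q w - (b:ℂ)‖ = r ^ 2 := by rw [hQb]; simp [hr_def]
    have h2 : ‖(b:ℂ)‖ ≤ ‖Q w‖ + ‖Q w - (b:ℂ)‖ := by
      have h3 := norm_sub_le (Q w) (Q w - (b:ℂ))
      calc ‖(b:ℂ)‖ = ‖Q w - (Q w - (b:ℂ))‖ :=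
            congrArg norm (by ring)
        _ ≤ _ := h3
    have hab : ‖(b:ℂ)‖ = -b := by
      rw [Complex.norm_real, Real.norm_eq_abs, abs_of_neg (by linarith)]
    rw [hab, h1] at h2
    linarith
  have hr1 : 1 < r := by nlinarith
  -- |u - 2s| * |u| > 1/3
  have hfac : (u - 2*(s:ℂ)) * u = Q w := by
    have hsb : ((s:ℂ))^2 = -(b:ℂ) := by
      rw [← Complex.ofReal_pow, hs_sq, Complex.ofReal_neg]
    rw [hQ]
    linear_combination -hsb
  set m : ℝ := ‖u - 2*(s:ℂ)‖ with hm_def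
  have hmt : 1/3 < m * t := by
    have : m * t = ‖Q w‖ := by
      rw [hm_def, ht_def, ← norm_mul, hfac]
    linarith [this ▸ hlo]
  have hm0 : 0 ≤ m := norm_nonneg _
  have hm_le : m ≤ r + s := by
    have h : u - 2*(s:ℂ) = (u - (s:ℂ)) + (-(s:ℂ)) := by ring
    calc m = ‖(u - (s:ℂ)) + (-(s:ℂ))‖ := by rw [hm_def, h]
      _ ≤ r + ‖-(s:ℂ)‖ := norm_add_le _ _
      _ = r + s := by rw [norm_neg, Complex.norm_real, Real.norm_eq_abs, abs_of_nonneg hs0]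
  -- key: r * |w|^(N-1) > 1/(12 s)
  have hkey : 1 / (12 * s) < r * ‖w‖ ^ (N-1) := by
    have hwpow : ‖w‖ ^ N = t := by rw [ht_def, hu, norm_pow]
    have h12s : (0:ℝ) < 12 * s := by linarith
    rcases le_or_gt ‖w‖ 1 with hw | hw
    · have hwn : t ≤ ‖w‖ ^ (N-1) := by
        rw [← hwpow]
        exact pow_le_pow_of_le_one (norm_nonneg _) hw (Nat.sub_le _ _)
      have hrt : 1 / (12 * s) < r * t := by
        rw [div_lt_iff₀ h12s]
        have k1 : 3*(r+s) ≤ 12*(s*r) := by nlinarith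
        have k2 : m*t ≤ (r+s)*t := mul_le_mul_of_nonneg_right hm_le ht0
        nlinarith [mul_le_mul_of_nonneg_right k1 ht0]
      calc 1 / (12*s) < r * t := hrt
        _ ≤ r * ‖w‖ ^ (N-1) := by nlinarith
    · have hwn : (1:ℝ) ≤ ‖w‖ ^ (N-1) := one_le_pow₀ hw.le
      have : 1 / (12 * s) < 1 := by
        rw [div_lt_one h12s]; linarith
      nlinarith
  -- compute abs of derivative
  have habsD : ‖deriv Q w‖ = 2 * (2:ℝ)^n * (r * ‖w‖ ^ (N-1)) := by
    rw [hderiv]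
    rw [norm_mul, norm_mul, norm_mul, norm_pow]
    simp only [Complex.norm_two, Complex.norm_natCast]
    rw [hN]
    push_cast
    ring
  have hmain : (2:ℝ) ^ (n+1) / (12 * s) < ‖deriv Q w‖ := by
    rw [habsD, pow_succ]
    have h2n : (0:ℝ) < 2 * (2:ℝ)^n := by positivity
    calc (2:ℝ)^n * 2 / (12*s) = 2 * (2:ℝ)^n * (1/(12*s)) := by ring
      _ < 2 * (2:ℝ)^n * (r * ‖w‖ ^ (N-1)) := by
          exact mul_lt_mul_of_pos_left hkey h2n
  have hpos : (0:ℝ) < (2:ℝ) ^ (n+1) / (12 * s) := by positivity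
  refine ⟨?_, hmain, ?_, ?_⟩
  · intro h
    rw [h] at hmain
    simp at hmain
    linarith
  · have : 1 / (6*s) ≤ (2:ℝ)^(n+1) / (12*s) := by
      rw [div_le_div_iff₀ (by linarith) (by linarith)]
      have : (2:ℝ) ≤ 2^(n+1) := by
        calc (2:ℝ) = 2^1 := by norm_num
          _ ≤ 2^(n+1) := by exact pow_le_pow_right₀ (by norm_num) (by omega)
      nlinarith
    linarith
  · intro h12
    have h2n : (0:ℝ) < (2:ℝ)^n := by positivity
    have : (2:ℝ) ≤ (2:ℝ)^(n+1) / (12*s) := by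
      rw [le_div_iff₀ (by linarith), pow_succ]
      nlinarith
    linarith
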